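/- Let A be a complex unital Banach algebra and τ : A → ℂ a continuous linear functional with the trace property τ(ab) = τ(ba) for all a, b ∈ A. Let p : ℝ → A be a continuously differentiable path such that p(t)² = p(t) for all t. Then τ(p(t)) is constant in t: τ(p(t)) = τ(p(0)) for all t ∈ ℝ. -/

import Mathlib

/-- **Homotopy invariance of the trace of a path of idempotents.**
Let `A` be a complex unital Banach algebra and `τ : A → ℂ` a continuous linear functional
with the trace property `τ(ab) = τ(ba)`.  If `p : ℝ → A` is a continuously differentiable
path of idempotents (`p(t)² = p(t)` for all `t`), then `τ(p(t))` is constant: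
`τ(p(t)) = τ(p(0))` for all `t`. -/
theorem trace_of_idempotent_path_constant
    {A : Type*} [NormedRing A] [NormedAlgebra ℂ A] [CompleteSpace A]
    (τ : A →L[ℂ] ℂ) (htr : ∀ a b : A, τ (a * b) = τ (b * a))
    (p : ℝ → A) (hp : ContDiff ℝ 1 p) (hidem : ∀ t : ℝ, p t * p t = p t) :
    ∀ t : ℝ, τ (p t) = τ (p 0) := by
  have hdiff : Differentiable ℝ p := hp.differentiable one_ne_zero
  have key : ∀ t : ℝ, HasDerivAt (fun s => τ (p s)) 0 t := by
    intro t
    have hpt : HasDerivAt p (deriv p t) t := (hdiff t).hasDerivAt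
    have hmul : HasDerivAt (fun s => p s * p s)
        (deriv p t * p t + p t * deriv p t) t := hpt.mul hpt
    have heq : (fun s => p s * p s) = p := funext hidem
    rw [heq] at hmul
    have hrel : deriv p t = deriv p t * p t + p t * deriv p t :=
      hpt.unique hmul
    set q := p t
    set q' := deriv p t
    have hq : q * q = q := hidem t
    -- q q' q = 0
    have hqq'q : q * q' * q = 0 := by
      have h : q * q' * q + q * q' * q = q * q' * q := by
        calc q * q' * q + q * q' * q
            = q * (q' * q) * q + q * (q * q') * q := by
              simp only [← mul_assoc]
              rw [mul_assoc (q * q') q q, hq]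
          _ = q * (q' * q + q * q') * q := by rw [mul_add, add_mul]
          _ = q * q' * q := by rw [← hrel]
      exact add_eq_left.mp h
    have h1 : τ (q * q') = 0 := by
      have : q * q' = q * (q * q') := by rw [← mul_assoc, hq]
      rw [this, htr, mul_assoc, ← mul_assoc, hqq'q]
      simp
    have h2 : τ (q' * q) = 0 := by
      have : q' * q = (q' * q) * q := by rw [mul_assoc, hq]
      rw [this, htr, ← mul_assoc, hqq'q]
      simp
    have hτ : HasDerivAt (fun s => τ (p s)) (τ q') t :=
      (τ.restrictScalars ℝ).hasFDerivAt.comp_hasDerivAt t hpt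
    have : τ q' = 0 := by
      rw [hrel, map_add, h1, h2, add_zero]
    rwa [this] at hτ
  intro t
  have : ∀ s : ℝ, deriv (fun s => τ (p s)) s = 0 := fun s => (key s).deriv
  exact is_const_of_deriv_eq_zero (fun s => (key s).differentiableAt) this t 0
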